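/- With C̃ symmetric of full rank, A_α = C̃ + α1ᵀ + 1αᵀ invertible, v(α) = 1/(1ᵀA_α⁻¹1), C_α = A_α − v(α)11ᵀ, a = Σᵢαᵢ, and c = 1ᵀC̃1, the squared Frobenius norm satisfies ‖C_α‖_F² = ‖C̃‖_F² + 2M·Σᵢαᵢ² + M²v(α)² + 4·(1ᵀC̃α) + 2a² − 2c·v(α) − 4Ma·v(α). -/

import Mathlib

open Matrix BigOperators

/-- `A_α = C̃ + α1ᵀ + 1αᵀ`. -/
noncomputable def Amat {M : ℕ} (Ct : Matrix (Fin M) (Fin M) ℝ) (α : Fin M → ℝ) :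
    Matrix (Fin M) (Fin M) ℝ :=
  Ct + vecMulVec α (1 : Fin M → ℝ) + vecMulVec (1 : Fin M → ℝ) α

/-- `v(α) = 1/(1ᵀ A_α⁻¹ 1)`. -/
noncomputable def vfun {M : ℕ} (Ct : Matrix (Fin M) (Fin M) ℝ) (α : Fin M → ℝ) : ℝ :=
  1 / ((1 : Fin M → ℝ) ⬝ᵥ ((Amat Ct α)⁻¹ *ᵥ (1 : Fin M → ℝ)))

/-- `C_α = A_α − v(α)·11ᵀ`. -/
noncomputable def Cmat {M : ℕ} (Ct : Matrix (Fin M) (Fin M) ℝ) (α : Fin M → ℝ) :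
    Matrix (Fin M) (Fin M) ℝ :=
  Amat Ct α - vfun Ct α • vecMulVec (1 : Fin M → ℝ) (1 : Fin M → ℝ)

/-- Squared Frobenius norm `‖X‖_F² = Σᵢⱼ Xᵢⱼ²`. -/
noncomputable def frobSq {M : ℕ} (X : Matrix (Fin M) (Fin M) ℝ) : ℝ :=
  ∑ i, ∑ j, (X i j) ^ 2

/-- Expansion of the squared Frobenius norm of `C_α`:
`‖C_α‖_F² = ‖C̃‖_F² + 2M Σαᵢ² + M²v(α)² + 4·1ᵀC̃α + 2a² − 2c·v(α) − 4Ma·v(α)`. -/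
theorem frobSq_Cmat_expansion {M : ℕ} (Ct : Matrix (Fin M) (Fin M) ℝ) (hsym : Ct.IsSymm)
    (α : Fin M → ℝ) (h : IsUnit (Amat Ct α).det) :
    frobSq (Cmat Ct α)
      = frobSq Ct + 2 * (M : ℝ) * (∑ i, (α i) ^ 2) + (M : ℝ) ^ 2 * (vfun Ct α) ^ 2
        + 4 * ((1 : Fin M → ℝ) ⬝ᵥ (Ct *ᵥ α))
        + 2 * (∑ i, α i) ^ 2
        - 2 * ((1 : Fin M → ℝ) ⬝ᵥ (Ct *ᵥ (1 : Fin M → ℝ))) * vfun Ct α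
        - 4 * (M : ℝ) * (∑ i, α i) * vfun Ct α := by
  set v := vfun Ct α with hv
  have hCtsym : ∀ i j, Ct j i = Ct i j := fun i j => congrFun (congrFun hsym i) j
  have hswap : (∑ i, ∑ j, Ct i j * α i) = ∑ i, ∑ j, Ct i j * α j := by
    rw [Finset.sum_comm]
    exact Finset.sum_congr rfl fun i _ => Finset.sum_congr rfl fun j _ => by rw [hCtsym]
  simp only [frobSq, Cmat, Amat, Matrix.sub_apply, Matrix.add_apply, Matrix.smul_apply, vecMulVec_apply,
    Pi.one_apply, smul_eq_mul, mul_one, one_mul, dotProduct, mulVec]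
  have key : ∀ i j : Fin M, (Ct i j + α i + α j - v) ^ 2
      = Ct i j ^ 2 + α i ^ 2 + α j ^ 2 + v ^ 2 + 2 * (Ct i j * α i) + 2 * (Ct i j * α j)
        + 2 * (α i * α j) - 2 * v * Ct i j - 2 * v * α i - 2 * v * α j := fun i j => by ring
  simp only [← hv, key]
  simp only [Finset.sum_add_distrib, Finset.sum_sub_distrib, ← Finset.mul_sum,
    Finset.sum_const, Finset.card_univ, Fintype.card_fin, nsmul_eq_mul, ← Finset.sum_mul]
  simp only [Finset.sum_mul]
  rw [hswap]
  have h1 : (∑ i : Fin M, ∑ j : Fin M, α i ^ 2) = (M : ℝ) * ∑ i, α i ^ 2 := by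
    simp [Finset.sum_const, Finset.mul_sum]
  have h2 : (∑ i : Fin M, ∑ j : Fin M, α j ^ 2) = (M : ℝ) * ∑ i, α i ^ 2 := by
    rw [Finset.sum_comm]; simp [Finset.sum_const, Finset.mul_sum]
  have h3 : (∑ i : Fin M, ∑ j : Fin M, α i * α j) = (∑ i, α i) ^ 2 := by
    rw [sq, Finset.sum_mul_sum]
  have h4 : (∑ i : Fin M, ∑ j : Fin M, α j) = (M : ℝ) * ∑ i, α i := by
    rw [Finset.sum_comm]; simp [Finset.sum_const, Finset.mul_sum]
  have h5 : (∑ i : Fin M, α i * ∑ j : Fin M, α j) = (∑ i, α i) ^ 2 := by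
    rw [← Finset.sum_mul, sq]
  rw [h5]
  ring
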